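/- Let B, N > 0 and φ ∈ C([0,T]). With G, G*, H, H* the solution operators as defined, one has G(H*(φ)) = H(G*(φ)) as functions on [0,T]. -/

import Mathlib

/-- `G(H*(φ)) = H(G*(φ))` on `[0,T]`. Here `Hs = H*(φ)` with
auxiliary `C = G(H*(φ))`; `Gs = G*(φ)`; and `HG = H(G*(φ))` with auxiliary
`A = G*(H(G*(φ)))`. -/
theorem stmt_6 (T B N : ℝ) (hT : 0 < T) (hB : 0 < B) (hN : 0 < N)
    (φ Hs Hs' C C' Gs Gs' HG HG' A A' : ℝ → ℝ)
    (hφ : ContinuousOn φ (Set.Icc 0 T))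
    -- Hs = H*(φ), C = G(Hs)
    (hHsd : ∀ t ∈ Set.Icc (0:ℝ) T, HasDerivWithinAt Hs (Hs' t) (Set.Icc 0 T) t)
    (hHsc : ContinuousOn Hs' (Set.Icc 0 T))
    (hCd : ∀ t ∈ Set.Icc (0:ℝ) T, HasDerivWithinAt C (C' t) (Set.Icc 0 T) t)
    (hCc : ContinuousOn C' (Set.Icc 0 T))
    (hCeq : ∀ t ∈ Set.Icc (0:ℝ) T, C' t + (B + N⁻¹) * C t = Hs t)
    (hC0 : C 0 = 0)
    (hHseq : ∀ t ∈ Set.Icc (0:ℝ) T,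
      -Hs' t + (B + N⁻¹) * Hs t - N⁻¹ * (B + N⁻¹) * C t = φ t)
    (hHsT : Hs T = 0)
    -- Gs = G*(φ)
    (hGsd : ∀ t ∈ Set.Icc (0:ℝ) T, HasDerivWithinAt Gs (Gs' t) (Set.Icc 0 T) t)
    (hGsc : ContinuousOn Gs' (Set.Icc 0 T))
    (hGseq : ∀ t ∈ Set.Icc (0:ℝ) T, -Gs' t + (B + N⁻¹) * Gs t = φ t)
    (hGsT : Gs T = 0)
    -- HG = H(Gs), A = G*(HG)
    (hHGd : ∀ t ∈ Set.Icc (0:ℝ) T, HasDerivWithinAt HG (HG' t) (Set.Icc 0 T) t)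
    (hHGc : ContinuousOn HG' (Set.Icc 0 T))
    (hAd : ∀ t ∈ Set.Icc (0:ℝ) T, HasDerivWithinAt A (A' t) (Set.Icc 0 T) t)
    (hAc : ContinuousOn A' (Set.Icc 0 T))
    (hAeq : ∀ t ∈ Set.Icc (0:ℝ) T, -A' t + (B + N⁻¹) * A t = HG t)
    (hAT : A T = 0)
    (hHGeq : ∀ t ∈ Set.Icc (0:ℝ) T,
      HG' t + (B + N⁻¹) * HG t - N⁻¹ * (B + N⁻¹) * A t = Gs t)
    (hHG0 : HG 0 = 0) :
    ∀ t ∈ Set.Icc (0:ℝ) T, C t = HG t := by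
  set k : ℝ := B + N⁻¹ with hk
  set m : ℝ := N⁻¹ * (B + N⁻¹) with hm
  have hkpos : 0 < k := by positivity
  set u : ℝ → ℝ := fun t => C t - HG t with hu
  set v : ℝ → ℝ := fun t => Hs t - Gs t - m * A t with hv
  -- derivative of u
  have hud : ∀ t ∈ Set.Icc (0:ℝ) T,
      HasDerivWithinAt u (v t - k * u t) (Set.Icc 0 T) t := by
    intro t ht
    have h1 := (hCd t ht).sub (hHGd t ht)
    have e1 := hCeq t ht
    have e2 := hHGeq t ht
    have : C' t - HG' t = v t - k * u t := by
      simp only [hv, hu]; linear_combination e1 - e2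
    rwa [this] at h1
  -- derivative of v
  have hvd : ∀ t ∈ Set.Icc (0:ℝ) T,
      HasDerivWithinAt v (k * v t - m * u t) (Set.Icc 0 T) t := by
    intro t ht
    have h1 := ((hHsd t ht).sub (hGsd t ht)).sub ((hAd t ht).const_mul m)
    have e1 := hHseq t ht
    have e2 := hGseq t ht
    have e3 := hAeq t ht
    have : Hs' t - Gs' t - m * A' t = k * v t - m * u t := by
      simp only [hv, hu]; linear_combination -e1 + e2 + m * e3
    rwa [this] at h1
  set w : ℝ → ℝ := fun t => u t * (v t - k * u t) with hw
  have hwd : ∀ t ∈ Set.Icc (0:ℝ) T,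
      HasDerivWithinAt w ((v t - k * u t)^2 + k * B * (u t)^2) (Set.Icc 0 T) t := by
    intro t ht
    have h1 := (hud t ht).mul ((hvd t ht).sub ((hud t ht).const_mul k))
    have : (v t - k * u t) * (v t - k * u t) +
        u t * (k * v t - m * u t - k * (v t - k * u t))
        = (v t - k * u t)^2 + k * B * (u t)^2 := by
      simp only [hk, hm]; field_simp; ring
    rw [← this]; exact h1
  have hwc : ContinuousOn w (Set.Icc 0 T) := by
    intro t ht; exact ((hwd t ht).continuousWithinAt)
  have hmono : MonotoneOn w (Set.Icc 0 T) := by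
    apply monotoneOn_of_hasDerivWithinAt_nonneg (convex_Icc 0 T) hwc
      (f' := fun t => (v t - k * u t)^2 + k * B * (u t)^2)
    · intro x hx
      exact (hwd x (interior_subset hx)).mono interior_subset
    · intro x hx; positivity
  have h0mem : (0:ℝ) ∈ Set.Icc (0:ℝ) T := by constructor <;> linarith
  have hTmem : T ∈ Set.Icc (0:ℝ) T := by constructor <;> linarith
  have hw0 : w 0 = 0 := by simp [hw, hu, hC0, hHG0]
  have hwT : w T = -(k * (u T)^2) := by
    have : v T = 0 := by simp [hv, hHsT, hGsT, hAT]
    simp [hw, this]; ring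
  have huT : u T = 0 := by
    have h1 : w 0 ≤ w T := hmono h0mem hTmem (le_of_lt hT)
    rw [hw0, hwT] at h1
    have h4 : u T ^ 2 ≤ 0 := by
      by_contra h
      push_neg at h
      exact absurd (mul_pos hkpos h) (by linarith)
    exact (pow_eq_zero_iff two_ne_zero).mp (le_antisymm h4 (sq_nonneg _))
  have hwzero : ∀ t ∈ Set.Icc (0:ℝ) T, w t = 0 := by
    intro t ht
    have h1 : w 0 ≤ w t := hmono h0mem ht ht.1
    have h2 : w t ≤ w T := hmono ht hTmem ht.2
    rw [hw0] at h1
    rw [hwT, huT] at h2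
    simp at h2; linarith
  intro t ht
  have hzero : HasDerivWithinAt w 0 (Set.Icc 0 T) t := by
    have : HasDerivWithinAt (fun _ : ℝ => (0:ℝ)) 0 (Set.Icc 0 T) t :=
      (hasDerivWithinAt_const _ _ _)
    exact this.congr (fun x hx => hwzero x hx) (hwzero t ht)
  have hud' := (uniqueDiffOn_Icc hT) t ht
  have heq : (v t - k * u t)^2 + k * B * (u t)^2 = 0 :=
    ((hwd t ht).derivWithin hud').symm.trans (hzero.derivWithin hud')
  have hkB : 0 < k * B := mul_pos hkpos hB
  have h2 : k * B * u t ^ 2 ≤ 0 := by nlinarith [sq_nonneg (v t - k * u t)]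
  have h4 : u t ^ 2 ≤ 0 := by
    by_contra h
    push_neg at h
    exact absurd (mul_pos hkB h) (by linarith)
  have : u t = 0 := (pow_eq_zero_iff two_ne_zero).mp (le_antisymm h4 (sq_nonneg _))
  simpa [hu, sub_eq_zero] using this
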